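/- Fix τ ∈ ℍ, z ∈ ℂ, and a ∈ ℂ, with z ∉ ℤ+τℤ, 2z ∉ ℤ+τℤ, and (a+1)z ∉ ℤ+τℤ. Let F₂(t) = [θ(t+z)θ'(0)/(θ(t)θ(z))]² · [θ(t−z)θ'(0)/(θ(t)θ(−z))] · [θ(−t+2z)θ(z)/(θ(−t+z)θ(2z))] · [θ(t+(a+1)z)θ(z)/(θ(t+z)θ((a+1)z))] · [θ(t−(a+1)z)θ(z)/(θ(t−z)θ((a+1)z))]. Then F₂ has a simple pole at t = z with residue lim_{t→z} (t−z)·F₂(t) = −θ((a+2)z)θ(az)/θ((a+1)z)² · (θ'(0)/θ(z))². -/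

import Mathlib

open Complex Topology Filter

/-- `q = e^{2πiτ}`. -/
noncomputable def jq (τ : ℂ) : ℂ := Complex.exp (2 * Real.pi * I * τ)

/-- The Jacobi theta function
`θ(t,τ) = q^{1/8} · 2 sin(πt) · ∏_{n≥1}(1−qⁿ) · ∏_{n≥1}(1−qⁿe^{2πit})(1−qⁿe^{−2πit})`,
where `q^{1/8} = e^{πiτ/4}`. -/
noncomputable def jTheta (t τ : ℂ) : ℂ :=
  Complex.exp (Real.pi * I * τ / 4) * (2 * Complex.sin (Real.pi * t)) *
    (∏' n : ℕ, (1 - jq τ ^ (n + 1))) *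
    (∏' n : ℕ, (1 - jq τ ^ (n + 1) * Complex.exp (2 * Real.pi * I * t)) *
      (1 - jq τ ^ (n + 1) * Complex.exp (-(2 * Real.pi * I * t))))

/-- `θ(t)` with `τ` fixed. -/
noncomputable def th (τ t : ℂ) : ℂ := jTheta t τ

/-- `θ'(0)`, the derivative of `θ(·,τ)` at `t = 0`. -/
noncomputable def thd (τ : ℂ) : ℂ := deriv (fun t => jTheta t τ) 0

/-- Membership in the lattice `ℤ + τℤ`. -/
def inLat (τ t : ℂ) : Prop := ∃ m n : ℤ, t = (m : ℂ) + (n : ℂ) * τ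

/-- The function `F₂` arising in Case 2 of the proof of birational invariance:
`F₂(t) = [θ(t+z)θ'(0)/(θ(t)θ(z))]²·[θ(t−z)θ'(0)/(θ(t)θ(−z))]·
[θ(−t+2z)θ(z)/(θ(−t+z)θ(2z))]·[θ(t+(a+1)z)θ(z)/(θ(t+z)θ((a+1)z))]·
[θ(t−(a+1)z)θ(z)/(θ(t−z)θ((a+1)z))]`. -/
noncomputable def F₂ (τ z a t : ℂ) : ℂ :=
  (th τ (t + z) * thd τ / (th τ t * th τ z)) ^ 2 *
  (th τ (t - z) * thd τ / (th τ t * th τ (-z))) *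
  (th τ (-t + 2 * z) * th τ z / (th τ (-t + z) * th τ (2 * z))) *
  (th τ (t + (a + 1) * z) * th τ z / (th τ (t + z) * th τ ((a + 1) * z))) *
  (th τ (t - (a + 1) * z) * th τ z / (th τ (t - z) * th τ ((a + 1) * z)))

namespace ThetaResidueAux

noncomputable def fac (τ : ℂ) (n : ℕ) (t : ℂ) : ℂ :=
  (1 - jq τ ^ (n + 1) * Complex.exp (2 * Real.pi * I * t)) *
    (1 - jq τ ^ (n + 1) * Complex.exp (-(2 * Real.pi * I * t)))

noncomputable def gg (τ t : ℂ) : ℂ := ∏' n : ℕ, fac τ n t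

noncomputable def P1 (τ : ℂ) : ℂ := ∏' n : ℕ, (1 - jq τ ^ (n + 1))

lemma th_eq (τ t : ℂ) :
    th τ t = Complex.exp (Real.pi * I * τ / 4) * (2 * Complex.sin (Real.pi * t)) *
      P1 τ * gg τ t := rfl

variable {τ : ℂ}

lemma norm_jq_lt_one (hτ : 0 < τ.im) : ‖jq τ‖ < 1 := by
  have h : (2 * (Real.pi : ℂ) * I * τ).re = -(2 * Real.pi * τ.im) := by
    simp [Complex.mul_re, Complex.mul_im]
  rw [jq, Complex.norm_exp, h, Real.exp_lt_one_iff]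
  nlinarith [Real.pi_pos]

lemma one_sub_ne {x : ℂ} (h : ‖x‖ < 1) : (1 : ℂ) - x ≠ 0 := by
  intro h0
  rw [sub_eq_zero] at h0
  rw [← h0] at h
  simp at h

lemma two_pi_I_ne : (2 * (Real.pi : ℂ) * I) ≠ 0 := by
  simp [Real.pi_ne_zero, Complex.I_ne_zero]

lemma fac_ne_of_not_lat {t : ℂ} (ht : ¬ inLat τ t) (n : ℕ) : fac τ n t ≠ 0 := by
  have hq : jq τ ^ (n + 1) = Complex.exp (((n : ℂ) + 1) * (2 * Real.pi * I * τ)) := by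
    rw [jq, ← Complex.exp_nat_mul]
    push_cast
    ring_nf
  unfold fac
  apply mul_ne_zero
  · intro h0
    rw [sub_eq_zero] at h0
    rw [hq, ← Complex.exp_add] at h0
    obtain ⟨k, hk⟩ := Complex.exp_eq_one_iff.mp h0.symm
    apply ht
    refine ⟨k, -((n : ℤ) + 1), ?_⟩
    have h2 : ((n : ℂ) + 1) * τ + t = (k : ℂ) := by
      apply mul_left_cancel₀ two_pi_I_ne
      linear_combination hk
    push_cast
    linear_combination h2
  · intro h0
    rw [sub_eq_zero] at h0
    rw [hq, ← Complex.exp_add] at h0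
    obtain ⟨k, hk⟩ := Complex.exp_eq_one_iff.mp h0.symm
    apply ht
    refine ⟨-k, (n : ℤ) + 1, ?_⟩
    have h2 : ((n : ℂ) + 1) * τ - t = (k : ℂ) := by
      apply mul_left_cancel₀ two_pi_I_ne
      linear_combination hk
    push_cast
    linear_combination -h2

lemma fac_ne_zero (hτ : 0 < τ.im) (n : ℕ) : fac τ n 0 ≠ 0 := by
  have h1 : ‖jq τ ^ (n + 1)‖ < 1 := by
    rw [norm_pow]
    exact pow_lt_one₀ (norm_nonneg _) (norm_jq_lt_one hτ) (Nat.succ_ne_zero n)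
  unfold fac
  apply mul_ne_zero <;>
  · apply one_sub_ne
    simpa using h1

lemma fac_diff (τ : ℂ) (n : ℕ) : Differentiable ℂ (fac τ n) := by
  unfold fac
  fun_prop


lemma gg_nice (hτ : 0 < τ.im) (R : ℝ) (hR : 0 < R) :
    DifferentiableOn ℂ (gg τ) (Metric.ball 0 R) ∧
      ∀ t ∈ Metric.ball (0 : ℂ) R, ∃ (N : ℕ) (w : ℂ),
        gg τ t = (∏ i ∈ Finset.range N, fac τ i t) * Complex.exp w := by
  have hq0 : (0:ℝ) ≤ ‖jq τ‖ := norm_nonneg _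
  have hq1 : ‖jq τ‖ < 1 := norm_jq_lt_one hτ
  set qn := ‖jq τ‖ with hqn
  set K := Real.exp (2 * Real.pi * R) with hK
  have hK0 : 0 < K := Real.exp_pos _
  have hK1 : 1 ≤ K := Real.one_le_exp (by positivity)
  obtain ⟨N, hN⟩ : ∃ N : ℕ, ∀ n ≥ N, qn ^ (n + 1) * K ≤ 1 / 6 := by
    have h0 : Tendsto (fun n : ℕ => qn ^ n * K) atTop (𝓝 (0 * K)) :=
      (tendsto_pow_atTop_nhds_zero_of_lt_one hq0 hq1).mul_const K
    rw [zero_mul] at h0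
    have h1 := h0.comp (tendsto_add_atTop_nat 1)
    exact eventually_atTop.mp (h1.eventually (eventually_le_nhds (by norm_num)))
  -- norm bounds on the two exponential terms
  have hexp : ∀ t : ℂ, t ∈ Metric.ball (0 : ℂ) R → ∀ n : ℕ,
      ‖jq τ ^ (n + 1) * Complex.exp (2 * Real.pi * I * t)‖ ≤ qn ^ (n + 1) * K ∧
      ‖jq τ ^ (n + 1) * Complex.exp (-(2 * Real.pi * I * t))‖ ≤ qn ^ (n + 1) * K := by
    intro t ht n
    rw [Metric.mem_ball, dist_zero_right] at ht
    have him : |t.im| ≤ ‖t‖ := by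
      simpa using Complex.abs_im_le_norm t
    have h1 : (2 * (Real.pi : ℂ) * I * t).re = -(2 * Real.pi * t.im) := by
      simp [Complex.mul_re, Complex.mul_im]
    have h2 : (-(2 * (Real.pi : ℂ) * I * t)).re = 2 * Real.pi * t.im := by
      simp [h1]
    constructor <;>
      [ (have h3 : ‖Complex.exp (2 * (Real.pi:ℂ) * I * t)‖ ≤ K := by
          rw [Complex.norm_exp, h1, hK]
          apply Real.exp_le_exp.mpr
          have := abs_le.mp him
          nlinarith [Real.pi_pos]);
        (have h3 : ‖Complex.exp (-(2 * (Real.pi:ℂ) * I * t))‖ ≤ K := by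
          rw [Complex.norm_exp, h2, hK]
          apply Real.exp_le_exp.mpr
          have := abs_le.mp him
          nlinarith [Real.pi_pos])] <;>
    · rw [norm_mul, norm_pow]
      exact mul_le_mul_of_nonneg_left h3 (pow_nonneg hq0 _)
  -- bound on fac - 1 for large n
  have west : ∀ t ∈ Metric.ball (0 : ℂ) R, ∀ n : ℕ, N ≤ n →
      ‖fac τ n t - 1‖ ≤ 3 * (qn ^ (n + 1) * K) ∧ ‖fac τ n t - 1‖ ≤ 1 / 2 := by
    intro t ht n hn
    obtain ⟨hu, hv⟩ := hexp t ht n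
    set u := jq τ ^ (n + 1) * Complex.exp (2 * Real.pi * I * t) with hudef
    set v := jq τ ^ (n + 1) * Complex.exp (-(2 * Real.pi * I * t)) with hvdef
    have hc0 : (0:ℝ) ≤ qn ^ (n + 1) * K := by positivity
    have hc6 : qn ^ (n + 1) * K ≤ 1 / 6 := hN n hn
    have hkey : fac τ n t - 1 = u * v - u - v := by unfold fac; ring
    have hb : ‖fac τ n t - 1‖ ≤ 3 * (qn ^ (n + 1) * K) := by
      rw [hkey]
      calc ‖u * v - u - v‖ ≤ ‖u * v - u‖ + ‖v‖ := norm_sub_le _ _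
        _ ≤ ‖u * v‖ + ‖u‖ + ‖v‖ := by linarith [norm_sub_le (u * v) u]
        _ = ‖u‖ * ‖v‖ + ‖u‖ + ‖v‖ := by rw [norm_mul]
        _ ≤ 3 * (qn ^ (n + 1) * K) := by nlinarith [norm_nonneg u, norm_nonneg v]
    exact ⟨hb, hb.trans (by linarith)⟩
  -- the log bound
  have hlog : ∀ (n : ℕ) (t : ℂ), t ∈ Metric.ball (0 : ℂ) R →
      ‖Complex.log (fac τ (n + N) t)‖ ≤ (9 / 2 * (qn ^ (N + 1) * K)) * qn ^ n := by
    intro n t ht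
    obtain ⟨hb3, hb2⟩ := west t ht (n + N) (by omega)
    have heq : fac τ (n + N) t = 1 + (fac τ (n + N) t - 1) := by ring
    rw [heq]
    refine (Complex.norm_log_one_add_half_le_self hb2).trans ?_
    have hpow : qn ^ (n + N + 1) = qn ^ (N + 1) * qn ^ n := by
      rw [← pow_add]; congr 1; omega
    have := hb3
    rw [hpow] at this
    have hqpow : (0:ℝ) ≤ qn ^ n := pow_nonneg hq0 _
    nlinarith [norm_nonneg (fac τ (n + N) t - 1)]
  have hu : Summable (fun n : ℕ => (9 / 2 * (qn ^ (N + 1) * K)) * qn ^ n) :=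
    (summable_geometric_of_lt_one hq0 hq1).mul_left _
  set SS : ℂ → ℂ := fun t => ∑' n : ℕ, Complex.log (fac τ (n + N) t) with hSS
  have htu : TendstoUniformlyOn
      (fun (s : Finset ℕ) (t : ℂ) => ∑ n ∈ s, Complex.log (fac τ (n + N) t)) SS atTop
      (Metric.ball (0 : ℂ) R) := tendstoUniformlyOn_tsum hu hlog
  have hpartial : ∀ s : Finset ℕ, DifferentiableOn ℂ
      (fun t => ∑ n ∈ s, Complex.log (fac τ (n + N) t)) (Metric.ball (0 : ℂ) R) := by
    intro s
    apply DifferentiableOn.fun_sum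
    intro i _
    apply DifferentiableOn.clog ((fac_diff τ (i + N)).differentiableOn)
    intro x hx
    have hw := (west x hx (i + N) (by omega)).2
    rw [Complex.mem_slitPlane_iff]
    left
    have h2 : |(fac τ (i + N) x - 1).re| ≤ 1 / 2 :=
      le_trans (by simpa using Complex.abs_re_le_norm (fac τ (i + N) x - 1)) hw
    have hre : (fac τ (i + N) x).re = 1 + (fac τ (i + N) x - 1).re := by simp
    rw [hre]
    linarith [abs_le.mp h2]
  have hSSdiff : DifferentiableOn ℂ SS (Metric.ball (0 : ℂ) R) :=
    (htu.tendstoLocallyUniformlyOn).differentiableOn (.of_forall hpartial) Metric.isOpen_ball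
  have hfacne : ∀ t ∈ Metric.ball (0 : ℂ) R, ∀ n : ℕ, fac τ (n + N) t ≠ 0 := by
    intro t ht n h0
    have hw := (west t ht (n + N) (by omega)).2
    rw [h0] at hw
    norm_num at hw
  have hprod : ∀ t ∈ Metric.ball (0 : ℂ) R,
      HasProd (fun n => fac τ n t)
        ((∏ i ∈ Finset.range N, fac τ i t) * Complex.exp (SS t)) := by
    intro t ht
    have hsum : Summable (fun n : ℕ => Complex.log (fac τ (n + N) t)) :=
      Summable.of_norm_bounded hu (fun n => hlog n t ht)
    have h1 : HasProd (fun n : ℕ => fac τ (n + N) t) (Complex.exp (SS t)) := by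
      have h2 := hsum.hasSum.cexp
      have h3 : (Complex.exp ∘ fun n : ℕ => Complex.log (fac τ (n + N) t)) =
          fun n : ℕ => fac τ (n + N) t := funext fun n => Complex.exp_log (hfacne t ht n)
      rwa [h3] at h2
    exact HasProd.prod_range_mul (f := fun n => fac τ n t) h1
  have hrep : ∀ t ∈ Metric.ball (0 : ℂ) R,
      gg τ t = (∏ i ∈ Finset.range N, fac τ i t) * Complex.exp (SS t) := by
    intro t ht
    rw [gg]
    exact (hprod t ht).tprod_eq
  constructor
  · have hd : DifferentiableOn ℂ
        (fun t => (∏ i ∈ Finset.range N, fac τ i t) * Complex.exp (SS t))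
        (Metric.ball (0 : ℂ) R) :=
      (DifferentiableOn.fun_finsetProd fun i _ => (fac_diff τ i).differentiableOn).mul hSSdiff.cexp
    exact hd.congr hrep
  · exact fun t ht => ⟨N, SS t, hrep t ht⟩

lemma gg_diff (hτ : 0 < τ.im) : Differentiable ℂ (gg τ) := by
  intro x
  have hx : x ∈ Metric.ball (0 : ℂ) (‖x‖ + 1) := by
    rw [Metric.mem_ball, dist_zero_right]; linarith
  exact ((gg_nice hτ (‖x‖ + 1) (by positivity)).1 x hx).differentiableAt
    (Metric.isOpen_ball.mem_nhds hx)

lemma gg_ne (hτ : 0 < τ.im) {t : ℂ} (h : ∀ n, fac τ n t ≠ 0) : gg τ t ≠ 0 := by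
  have hx : t ∈ Metric.ball (0 : ℂ) (‖t‖ + 1) := by
    rw [Metric.mem_ball, dist_zero_right]; linarith
  obtain ⟨N, w, hw⟩ := (gg_nice hτ (‖t‖ + 1) (by positivity)).2 t hx
  rw [hw]
  exact mul_ne_zero (Finset.prod_ne_zero_iff.mpr fun i _ => h i) (Complex.exp_ne_zero w)

lemma P1_ne (hτ : 0 < τ.im) : P1 τ ≠ 0 := by
  have hq0 : (0:ℝ) ≤ ‖jq τ‖ := norm_nonneg _
  have hq1 : ‖jq τ‖ < 1 := norm_jq_lt_one hτ
  set qn := ‖jq τ‖ with hqn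
  have hfn : ∀ n : ℕ, (1 : ℂ) - jq τ ^ (n + 1) ≠ 0 := fun n =>
    one_sub_ne (by rw [norm_pow]; exact pow_lt_one₀ hq0 hq1 (Nat.succ_ne_zero n))
  obtain ⟨N, hN⟩ : ∃ N : ℕ, ∀ n ≥ N, qn ^ (n + 1) ≤ 1 / 2 := by
    have h0 := (tendsto_pow_atTop_nhds_zero_of_lt_one hq0 hq1).comp (tendsto_add_atTop_nat 1)
    exact eventually_atTop.mp (h0.eventually (eventually_le_nhds (by norm_num)))
  have hlog : ∀ n : ℕ, ‖Complex.log (1 - jq τ ^ (n + N + 1))‖ ≤ (3 / 2 * qn ^ (N + 1)) * qn ^ n := by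
    intro n
    have hb : ‖-(jq τ ^ (n + N + 1))‖ ≤ 1 / 2 := by
      rw [norm_neg, norm_pow]; exact hN (n + N) (by omega)
    have h := Complex.norm_log_one_add_half_le_self hb
    rw [show (1 : ℂ) + -(jq τ ^ (n + N + 1)) = 1 - jq τ ^ (n + N + 1) by ring] at h
    refine h.trans ?_
    rw [norm_neg, norm_pow]
    have hpow : qn ^ (n + N + 1) = qn ^ (N + 1) * qn ^ n := by
      rw [← pow_add]; congr 1; omega
    rw [hpow]
    apply le_of_eq; ring
  have hsum : Summable (fun n : ℕ => Complex.log (1 - jq τ ^ (n + N + 1))) :=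
    Summable.of_norm_bounded ((summable_geometric_of_lt_one hq0 hq1).mul_left _) hlog
  have h1 : HasProd (fun n : ℕ => 1 - jq τ ^ (n + N + 1))
      (Complex.exp (∑' n : ℕ, Complex.log (1 - jq τ ^ (n + N + 1)))) := by
    have h2 := hsum.hasSum.cexp
    have h3 : (Complex.exp ∘ fun n : ℕ => Complex.log (1 - jq τ ^ (n + N + 1))) =
        fun n : ℕ => 1 - jq τ ^ (n + N + 1) := funext fun n => Complex.exp_log (hfn (n + N))
    rwa [h3] at h2
  have h4 := HasProd.prod_range_mul (f := fun n : ℕ => 1 - jq τ ^ (n + 1)) h1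
  rw [P1, h4.tprod_eq]
  exact mul_ne_zero (Finset.prod_ne_zero_iff.mpr fun i _ => hfn i) (Complex.exp_ne_zero _)

lemma th_zero (τ : ℂ) : th τ 0 = 0 := by
  rw [th_eq]; simp

lemma gg_neg (τ t : ℂ) : gg τ (-t) = gg τ t := by
  unfold gg
  refine tprod_congr fun n => ?_
  unfold fac
  rw [show 2 * (Real.pi : ℂ) * I * (-t) = -(2 * (Real.pi : ℂ) * I * t) by ring, neg_neg]
  ring

lemma th_neg (τ t : ℂ) : th τ (-t) = - th τ t := by
  rw [th_eq τ (-t), th_eq τ t, gg_neg]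
  rw [show (Real.pi : ℂ) * (-t) = -((Real.pi : ℂ) * t) by ring, Complex.sin_neg]
  ring

lemma th_diff (hτ : 0 < τ.im) : Differentiable ℂ (th τ) := by
  have hfun : th τ = fun t => Complex.exp (Real.pi * I * τ / 4) * (2 * Complex.sin (Real.pi * t)) *
      P1 τ * gg τ t := funext fun t => th_eq τ t
  rw [hfun]
  have hg := gg_diff hτ
  fun_prop

lemma th_ne_of_not_lat (hτ : 0 < τ.im) {t : ℂ} (ht : ¬ inLat τ t) : th τ t ≠ 0 := by
  rw [th_eq]
  have hπ : (Real.pi : ℂ) ≠ 0 := Complex.ofReal_ne_zero.mpr Real.pi_ne_zero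
  have hsin : Complex.sin (Real.pi * t) ≠ 0 := by
    intro h0
    obtain ⟨k, hk⟩ := Complex.sin_eq_zero_iff.mp h0
    apply ht
    refine ⟨k, 0, ?_⟩
    have h2 : t = (k : ℂ) := by
      apply mul_left_cancel₀ hπ
      rw [hk]; ring
    simp [h2]
  exact mul_ne_zero (mul_ne_zero (mul_ne_zero (Complex.exp_ne_zero _)
    (mul_ne_zero two_ne_zero hsin)) (P1_ne hτ)) (gg_ne hτ (fac_ne_of_not_lat ht))

lemma thd_spec (hτ : 0 < τ.im) : HasDerivAt (th τ) (thd τ) 0 ∧ thd τ ≠ 0 := by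
  have hπ : (Real.pi : ℂ) ≠ 0 := Complex.ofReal_ne_zero.mpr Real.pi_ne_zero
  set c : ℂ := Complex.exp (Real.pi * I * τ / 4) * 2 * P1 τ with hc
  have hg : HasDerivAt (gg τ) (deriv (gg τ) 0) 0 := ((gg_diff hτ) 0).hasDerivAt
  have hlin : HasDerivAt (fun t : ℂ => (Real.pi : ℂ) * t) ((Real.pi : ℂ)) 0 := by
    simpa using (hasDerivAt_id (0 : ℂ)).const_mul ((Real.pi : ℂ))
  have hsin : HasDerivAt (fun t : ℂ => Complex.sin ((Real.pi : ℂ) * t))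
      (Complex.cos ((Real.pi : ℂ) * 0) * (Real.pi : ℂ)) 0 :=
    (Complex.hasDerivAt_sin _).comp 0 hlin
  have hmul := hsin.fun_mul hg
  have hcm := hmul.const_mul c
  have hth : HasDerivAt (th τ) (c * ((Real.pi : ℂ) * gg τ 0)) 0 := by
    have hfun : th τ = fun t => c * (Complex.sin ((Real.pi : ℂ) * t) * gg τ t) :=
      funext fun t => by rw [th_eq, hc]; ring
    rw [hfun]
    refine hcm.congr_deriv ?_
    simp
  have hdval : thd τ = c * ((Real.pi : ℂ) * gg τ 0) := hth.deriv
  refine ⟨by rw [hdval]; exact hth, ?_⟩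
  rw [hdval]
  exact mul_ne_zero (mul_ne_zero (mul_ne_zero (Complex.exp_ne_zero _) two_ne_zero) (P1_ne hτ))
    (mul_ne_zero hπ (gg_ne hτ (fac_ne_zero hτ)))

lemma aux (s A1 A2 A3 A4 A5 A6 A7 A8 A9 A10 B C : ℂ) (hs : s ≠ 0) :
    (A1 * A2 / (A3 * A4)) ^ 2 * (B / s * A2 / (A3 * A5)) * (A6 * A4 / (-(C / -s * A7))) *
        (A8 * A4 / (A1 * A9)) * (A10 * A4 / (B / s * A9)) =
      s * ((A1 * A2 / (A3 * A4)) ^ 2 * (B * A2 / (A3 * A5)) * (A6 * A4 / (C * A7)) *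
        (A8 * A4 / (A1 * A9)) * (A10 * A4 / (B * A9))) := by
  by_cases hB : B = 0
  · simp [hB]
  by_cases hC : C = 0
  · simp [hC]
  by_cases h1 : A1 = 0
  · simp [h1]
  by_cases h3 : A3 = 0
  · simp [h3]
  by_cases h4 : A4 = 0
  · simp [h4]
  by_cases h5 : A5 = 0
  · simp [h5]
  by_cases h7 : A7 = 0
  · simp [h7]
  by_cases h9 : A9 = 0
  · simp [h9]
  field_simp [hs, hB, hC, h1, h3, h4, h5, h7, h9]

lemma calcaux (m d p A P Q : ℂ) (hp : p ≠ 0) (hm : m ≠ 0) (hd : d ≠ 0) (hA : A ≠ 0) :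
    (m * d / (p * p)) ^ 2 * (d * d / (p * -p)) * (p * p / (-(d * m))) *
        (P * p / (m * A)) * (-Q * p / (d * A)) =
      -(P * Q / A ^ 2 * (d / p) ^ 2) := by
  field_simp

end ThetaResidueAux

open ThetaResidueAux in
/-- `F₂` has a simple pole at `t = z` with residue
`lim_{t→z} (t−z)F₂(t) = −θ((a+2)z)θ(az)/θ((a+1)z)²·(θ'(0)/θ(z))²`. -/
theorem F₂_residue_at_z (τ z a : ℂ) (hτ : 0 < τ.im)
    (hz : ¬ inLat τ z) (h2z : ¬ inLat τ (2 * z)) (haz : ¬ inLat τ ((a + 1) * z)) :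
    Filter.Tendsto (fun t : ℂ => (t - z) * F₂ τ z a t) (𝓝[≠] z)
      (𝓝 (-(th τ ((a + 2) * z) * th τ (a * z) / (th τ ((a + 1) * z)) ^ 2 *
        (thd τ / th τ z) ^ 2))) := by

  have hthz : th τ z ≠ 0 := th_ne_of_not_lat hτ hz
  have hth2z : th τ (2 * z) ≠ 0 := th_ne_of_not_lat hτ h2z
  have hthaz : th τ ((a + 1) * z) ≠ 0 := th_ne_of_not_lat hτ haz
  obtain ⟨hder, hthd⟩ := thd_spec hτ
  have hcont : Continuous (th τ) := (th_diff hτ).continuous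
  have hneg : th τ (-z) = - th τ z := th_neg τ z
  have hnegz_ne : th τ (-z) ≠ 0 := by rw [hneg]; exact neg_ne_zero.mpr hthz
  have hslope : Tendsto (fun s : ℂ => th τ s / s) (𝓝[≠] (0 : ℂ)) (𝓝 (thd τ)) := by
    have h := hasDerivAt_iff_tendsto_slope.mp hder
    apply h.congr
    intro s
    simp [slope_def_field, th_zero]
  have h1 : Tendsto (fun t : ℂ => t - z) (𝓝[≠] z) (𝓝[≠] (0 : ℂ)) := by
    rw [tendsto_nhdsWithin_iff]
    constructor
    · have h : Tendsto (fun t : ℂ => t - z) (𝓝 z) (𝓝 (z - z)) :=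
        (continuous_id.sub continuous_const).tendsto z
      rw [sub_self] at h
      exact h.mono_left nhdsWithin_le_nhds
    · filter_upwards [self_mem_nhdsWithin] with x hx
      simp only [Set.mem_compl_singleton_iff] at hx ⊢
      exact sub_ne_zero.mpr hx
  have h2 : Tendsto (fun t : ℂ => -t + z) (𝓝[≠] z) (𝓝[≠] (0 : ℂ)) := by
    rw [tendsto_nhdsWithin_iff]
    constructor
    · have h : Tendsto (fun t : ℂ => -t + z) (𝓝 z) (𝓝 (-z + z)) :=
        (continuous_id.neg.add continuous_const).tendsto z
      rw [neg_add_cancel] at h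
      exact h.mono_left nhdsWithin_le_nhds
    · filter_upwards [self_mem_nhdsWithin] with x hx
      simp only [Set.mem_compl_singleton_iff] at hx ⊢
      intro h0
      exact hx (by linear_combination -h0)
  have hYt : Tendsto (fun t : ℂ => th τ (t - z) / (t - z)) (𝓝[≠] z) (𝓝 (thd τ)) :=
    hslope.comp h1
  have hWt : Tendsto (fun t : ℂ => th τ (-t + z) / -(t - z)) (𝓝[≠] z) (𝓝 (thd τ)) := by
    have h := hslope.comp h2
    apply h.congr
    intro x
    show th τ (-x + z) / (-x + z) = th τ (-x + z) / -(x - z)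
    rw [show -x + z = -(x - z) by ring]
  have e0 : Tendsto (fun t : ℂ => th τ t) (𝓝[≠] z) (𝓝 (th τ z)) :=
    (hcont.tendsto z).mono_left nhdsWithin_le_nhds
  have e1 : Tendsto (fun t : ℂ => th τ (t + z)) (𝓝[≠] z) (𝓝 (th τ (2 * z))) := by
    have h : Tendsto (fun t : ℂ => th τ (t + z)) (𝓝 z) (𝓝 (th τ (z + z))) :=
      (hcont.comp (continuous_id.add continuous_const)).tendsto z
    rw [show z + z = 2 * z by ring] at h
    exact h.mono_left nhdsWithin_le_nhds
  have e2 : Tendsto (fun t : ℂ => th τ (-t + 2 * z)) (𝓝[≠] z) (𝓝 (th τ z)) := by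
    have h : Tendsto (fun t : ℂ => th τ (-t + 2 * z)) (𝓝 z) (𝓝 (th τ (-z + 2 * z))) :=
      (hcont.comp (continuous_id.neg.add continuous_const)).tendsto z
    rw [show -z + 2 * z = z by ring] at h
    exact h.mono_left nhdsWithin_le_nhds
  have e3 : Tendsto (fun t : ℂ => th τ (t + (a + 1) * z)) (𝓝[≠] z)
      (𝓝 (th τ ((a + 2) * z))) := by
    have h : Tendsto (fun t : ℂ => th τ (t + (a + 1) * z)) (𝓝 z)
        (𝓝 (th τ (z + (a + 1) * z))) :=
      (hcont.comp (continuous_id.add continuous_const)).tendsto z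
    rw [show z + (a + 1) * z = (a + 2) * z by ring] at h
    exact h.mono_left nhdsWithin_le_nhds
  have e4 : Tendsto (fun t : ℂ => th τ (t - (a + 1) * z)) (𝓝[≠] z)
      (𝓝 (th τ (-(a * z)))) := by
    have h : Tendsto (fun t : ℂ => th τ (t - (a + 1) * z)) (𝓝 z)
        (𝓝 (th τ (z - (a + 1) * z))) :=
      (hcont.comp (continuous_id.sub continuous_const)).tendsto z
    rw [show z - (a + 1) * z = -(a * z) by ring] at h
    exact h.mono_left nhdsWithin_le_nhds
  have hP : Tendsto (fun t : ℂ => (th τ (t + z) * thd τ / (th τ t * th τ z)) ^ 2) (𝓝[≠] z)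
      (𝓝 ((th τ (2 * z) * thd τ / (th τ z * th τ z)) ^ 2)) :=
    ((e1.mul tendsto_const_nhds).div (e0.mul tendsto_const_nhds)
      (mul_ne_zero hthz hthz)).pow 2
  have hQ : Tendsto (fun t : ℂ => th τ (t - z) / (t - z) * thd τ / (th τ t * th τ (-z)))
      (𝓝[≠] z) (𝓝 (thd τ * thd τ / (th τ z * th τ (-z)))) :=
    (hYt.mul tendsto_const_nhds).div (e0.mul tendsto_const_nhds)
      (mul_ne_zero hthz hnegz_ne)
  have hR : Tendsto (fun t : ℂ => th τ (-t + 2 * z) * th τ z /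
        (-(th τ (-t + z) / -(t - z) * th τ (2 * z)))) (𝓝[≠] z)
      (𝓝 (th τ z * th τ z / (-(thd τ * th τ (2 * z))))) :=
    (e2.mul tendsto_const_nhds).div ((hWt.mul tendsto_const_nhds).neg)
      (neg_ne_zero.mpr (mul_ne_zero hthd hth2z))
  have hS : Tendsto (fun t : ℂ => th τ (t + (a + 1) * z) * th τ z /
        (th τ (t + z) * th τ ((a + 1) * z))) (𝓝[≠] z)
      (𝓝 (th τ ((a + 2) * z) * th τ z / (th τ (2 * z) * th τ ((a + 1) * z)))) :=
    (e3.mul tendsto_const_nhds).div (e1.mul tendsto_const_nhds)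
      (mul_ne_zero hth2z hthaz)
  have hT : Tendsto (fun t : ℂ => th τ (t - (a + 1) * z) * th τ z /
        (th τ (t - z) / (t - z) * th τ ((a + 1) * z))) (𝓝[≠] z)
      (𝓝 (th τ (-(a * z)) * th τ z / (thd τ * th τ ((a + 1) * z)))) :=
    (e4.mul tendsto_const_nhds).div (hYt.mul tendsto_const_nhds)
      (mul_ne_zero hthd hthaz)
  have hH := (((hP.mul hQ).mul hR).mul hS).mul hT
  have key : Tendsto (fun t : ℂ => (t - z) * F₂ τ z a t) (𝓝[≠] z)
      (𝓝 ((th τ (2 * z) * thd τ / (th τ z * th τ z)) ^ 2 *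
        (thd τ * thd τ / (th τ z * th τ (-z))) *
        (th τ z * th τ z / (-(thd τ * th τ (2 * z)))) *
        (th τ ((a + 2) * z) * th τ z / (th τ (2 * z) * th τ ((a + 1) * z))) *
        (th τ (-(a * z)) * th τ z / (thd τ * th τ ((a + 1) * z))))) := by
    apply Filter.Tendsto.congr' _ hH
    filter_upwards [self_mem_nhdsWithin] with t ht
    have hs : t - z ≠ 0 := sub_ne_zero.mpr (Set.mem_compl_singleton_iff.mp ht)
    show (th τ (t + z) * thd τ / (th τ t * th τ z)) ^ 2 *
        (th τ (t - z) / (t - z) * thd τ / (th τ t * th τ (-z))) *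
        (th τ (-t + 2 * z) * th τ z / (-(th τ (-t + z) / -(t - z) * th τ (2 * z)))) *
        (th τ (t + (a + 1) * z) * th τ z / (th τ (t + z) * th τ ((a + 1) * z))) *
        (th τ (t - (a + 1) * z) * th τ z / (th τ (t - z) / (t - z) * th τ ((a + 1) * z))) =
      (t - z) * F₂ τ z a t
    rw [F₂]
    exact aux (t - z) (th τ (t + z)) (thd τ) (th τ t) (th τ z) (th τ (-z))
      (th τ (-t + 2 * z)) (th τ (2 * z)) (th τ (t + (a + 1) * z)) (th τ ((a + 1) * z))
      (th τ (t - (a + 1) * z)) (th τ (t - z)) (th τ (-t + z)) hs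
  have hVal : (th τ (2 * z) * thd τ / (th τ z * th τ z)) ^ 2 *
        (thd τ * thd τ / (th τ z * th τ (-z))) *
        (th τ z * th τ z / (-(thd τ * th τ (2 * z)))) *
        (th τ ((a + 2) * z) * th τ z / (th τ (2 * z) * th τ ((a + 1) * z))) *
        (th τ (-(a * z)) * th τ z / (thd τ * th τ ((a + 1) * z))) =
      -(th τ ((a + 2) * z) * th τ (a * z) / (th τ ((a + 1) * z)) ^ 2 *
        (thd τ / th τ z) ^ 2) := by
    rw [hneg, th_neg τ (a * z)]
    exact calcaux (th τ (2 * z)) (thd τ) (th τ z) (th τ ((a + 1) * z))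
      (th τ ((a + 2) * z)) (th τ (a * z)) hthz hth2z hthd hthaz
  rw [hVal] at key
  exact key
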